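/- Let d ≥ 2 and U = {x ∈ ℝ^d : x^1 > 0}. There is no family of functions μ_λ : U → ℝ, indexed by λ ∈ ℝ, such that (i) for every λ ≠ 0, every Ω > 0 and every x ∈ U: μ_λ(Ω x) = Ω^{1−d} μ_λ(x), and (ii) for every x ∈ U the function λ ↦ μ_λ(x) tends to 1 as λ → 0 through nonzero values. (Hence no gauge-invariant measure for κ-Minkowski electrodynamics is compatible with the commutative limit μ → 1.) -/
import Mathlib


set_option autoImplicit false

open scoped BigOperators

theorem stmt17 {d : ℕ} (hd : 2 ≤ d) :
    ¬ ∃ μ : ℝ → (Fin d → ℝ) → ℝ,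
      (∀ lam : ℝ, lam ≠ 0 → ∀ Ω : ℝ, 0 < Ω → ∀ x : Fin d → ℝ,
        0 < x ⟨1, by omega⟩ →
          μ lam (fun i => Ω * x i) = Ω ^ ((1 : ℤ) - d) * μ lam x) ∧
      (∀ x : Fin d → ℝ, 0 < x ⟨1, by omega⟩ →
        Filter.Tendsto (fun lam => μ lam x) (nhdsWithin 0 {(0 : ℝ)}ᶜ) (nhds 1)) := by
  rintro ⟨μ, hscale, hlim⟩
  set x : Fin d → ℝ := fun _ => 1 with hx
  have hx1 : 0 < x ⟨1, by omega⟩ := one_pos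
  have hy1 : 0 < (fun i => (2:ℝ) * x i) ⟨1, by omega⟩ := by norm_num [hx]
  have h1 : Filter.Tendsto (fun lam => μ lam (fun i => (2:ℝ) * x i))
      (nhdsWithin 0 {(0:ℝ)}ᶜ) (nhds 1) := hlim _ hy1
  have h2 : Filter.Tendsto (fun lam => μ lam (fun i => (2:ℝ) * x i))
      (nhdsWithin 0 {(0:ℝ)}ᶜ) (nhds ((2:ℝ) ^ ((1:ℤ) - d) * 1)) := by
    have := (hlim x hx1).const_mul ((2:ℝ) ^ ((1:ℤ) - d))
    refine this.congr' ?_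
    filter_upwards [self_mem_nhdsWithin] with lam hlam
    exact (hscale lam hlam 2 two_pos x hx1).symm
  have hne : (nhdsWithin (0:ℝ) {(0:ℝ)}ᶜ).NeBot := by
    simpa using (inferInstance : (nhdsWithin (0:ℝ) {(0:ℝ)}ᶜ).NeBot)
  have heq : (1:ℝ) = (2:ℝ) ^ ((1:ℤ) - d) * 1 := tendsto_nhds_unique h1 h2
  rw [mul_one] at heq
  have hlt : (2:ℝ) ^ ((1:ℤ) - d) < 1 := by
    apply zpow_lt_one_of_neg₀ (by norm_num)
    omega
  linarith [heq ▸ hlt]
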